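/- (Stanley's diagonal lemma.) Let f, g, h be polynomials over ℚ with h(0) = 0. In the ring of multivariate formal power series over ℚ in two variables x, y, the element u = 1 − x·f(xy) − y·g(xy) − h(xy) has constant term 1 and hence is invertible; let G = u⁻¹, and let D ∈ ℚ⟦t⟧ be the diagonal of G, i.e. the univariate power series whose n-th coefficient is the coefficient of x^n y^n in G. Then D(t)² · ((1 − h(t))² − 4·t·f(t)·g(t)) = 1 in ℚ⟦t⟧, i.e. D(t) = 1/√((1−h(t))² − 4t f(t) g(t)). -/

import Mathlib

open PowerSeries Finset
namespace StanleyAux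

noncomputable def sqc (B C : PowerSeries ℚ) : ℕ → ℚ
  | n =>
    if _hn : n = 0 then 1
    else (∑ m ∈ (Finset.range n).attach,
            (PowerSeries.coeff (n - m.1) B) * sqc B C m.1)
      - PowerSeries.coeff n C
      - ∑ i ∈ (Finset.Ioo 0 n).attach, sqc B C i.1 * sqc B C (n - i.1)
  decreasing_by
  · exact Finset.mem_range.mp m.2
  · exact (Finset.mem_Ioo.mp i.2).2
  · have := Finset.mem_Ioo.mp i.2; omega

lemma sqc_zero (B C : PowerSeries ℚ) : sqc B C 0 = 1 := by
  rw [sqc]; simp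

lemma sqc_pos (B C : PowerSeries ℚ) (n : ℕ) (hn : n ≠ 0) :
    sqc B C n = (∑ m ∈ Finset.range n, (PowerSeries.coeff (n - m) B) * sqc B C m)
      - PowerSeries.coeff n C
      - ∑ i ∈ Finset.Ioo 0 n, sqc B C i * sqc B C (n - i) := by
  rw [sqc]
  simp only [hn, dif_neg, ← Finset.sum_attach (Finset.range n)
    (fun m => (PowerSeries.coeff (n - m) B) * sqc B C m),
    ← Finset.sum_attach (Finset.Ioo 0 n) (fun i => sqc B C i * sqc B C (n - i))]
  simp

noncomputable def rr (B C : PowerSeries ℚ) : PowerSeries ℚ := PowerSeries.mk (sqc B C)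

lemma constantCoeff_rr (B C : PowerSeries ℚ) : constantCoeff (rr B C) = 1 := by
  simp [rr, ← coeff_zero_eq_constantCoeff, sqc_zero]

lemma rr_sq (B C : PowerSeries ℚ) (hB : constantCoeff B = 1)
    (hC : constantCoeff C = 0) :
    rr B C * rr B C = B * rr B C - C := by
  ext n
  rcases Nat.eq_zero_or_pos n with hn | hn
  · subst hn
    simp [rr, ← coeff_zero_eq_constantCoeff, hC, sqc_zero, hB,
      coeff_zero_eq_constantCoeff, map_mul]
  have h1 : n ≠ 0 := hn.ne'
  rw [map_sub, coeff_mul, coeff_mul,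
    Finset.Nat.sum_antidiagonal_eq_sum_range_succ_mk,
    Finset.Nat.sum_antidiagonal_eq_sum_range_succ_mk]
  have hsplit : Finset.range (n+1) = insert 0 (insert n (Finset.Ioo 0 n)) := by
    ext j; simp [Finset.mem_Ioo, Finset.mem_range]; omega
  have h0n : (0:ℕ) ∉ insert n (Finset.Ioo 0 n) := by simp; omega
  have hnn : n ∉ Finset.Ioo 0 n := by simp
  -- LHS
  rw [hsplit, Finset.sum_insert h0n, Finset.sum_insert hnn,
    Finset.sum_insert h0n, Finset.sum_insert hnn]
  simp only [rr, coeff_mk, Nat.sub_zero, Nat.sub_self]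
  rw [sqc_zero, ← coeff_zero_eq_constantCoeff] at *
  rw [hB]
  have hdef := sqc_pos B C n h1
  have hr : Finset.range n = insert 0 (Finset.Ioo 0 n) := by
    ext j; simp [Finset.mem_Ioo, Finset.mem_range]; omega
  rw [hr, Finset.sum_insert (by simp)] at hdef
  have hre : ∑ m ∈ Finset.Ioo 0 n, (PowerSeries.coeff (n - m)) B * sqc B C m
      = ∑ x ∈ Finset.Ioo 0 n, (PowerSeries.coeff x) B * sqc B C (n - x) := by
    refine Finset.sum_nbij' (fun m => n - m) (fun m => n - m) ?_ ?_ ?_ ?_ ?_ <;>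
      intro a ha <;> simp only [Finset.mem_Ioo] at ha ⊢ <;> try omega
    rw [Nat.sub_sub_self ha.2.le]
  rw [hre, sqc_zero] at hdef
  simp only [Nat.sub_zero] at hdef ⊢
  rw [hdef]; ring

section Cand
variable (A F G' : PowerSeries ℚ)

noncomputable def rS : PowerSeries ℚ := rr A (PowerSeries.X * F * G')

noncomputable def sS : PowerSeries ℚ := 2 * rS A F G' - A

lemma rS_sq (hA : constantCoeff A = 1) : rS A F G' * rS A F G' = A * rS A F G' - PowerSeries.X * F * G' := by
  apply rr_sq _ _ hA; simp

lemma constantCoeff_rS : constantCoeff (rS A F G') = 1 := constantCoeff_rr _ _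

lemma constantCoeff_sS (hA : constantCoeff A = 1) : constantCoeff (sS A F G') = 1 := by
  rw [sS, map_sub, map_mul, constantCoeff_rS, hA, map_ofNat]
  norm_num

lemma rS_ne : rS A F G' ≠ 0 := by
  intro hc
  have h1 := constantCoeff_rS A F G'
  rw [hc, map_zero] at h1
  exact zero_ne_one h1

lemma sS_ne (hA : constantCoeff A = 1) : sS A F G' ≠ 0 := by
  intro hc
  have h1 := constantCoeff_sS A F G' hA
  rw [hc, map_zero] at h1
  exact zero_ne_one h1

lemma rS_inv : rS A F G' * (rS A F G')⁻¹ = 1 :=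
  PowerSeries.mul_inv_cancel _ (by rw [constantCoeff_rS]; norm_num)

lemma sS_inv (hA : constantCoeff A = 1) : sS A F G' * (sS A F G')⁻¹ = 1 :=
  PowerSeries.mul_inv_cancel _ (by rw [constantCoeff_sS A F G' hA]; norm_num)

lemma sS_sq (hA : constantCoeff A = 1) :
    sS A F G' * sS A F G' = A * A - 4 * (PowerSeries.X * F * G') := by
  have h := rS_sq A F G' hA
  unfold sS
  linear_combination 4 * h

noncomputable def cfam : ℤ → PowerSeries ℚ := fun k =>
  if 0 ≤ k then F ^ k.toNat * ((rS A F G')⁻¹) ^ k.toNat * (sS A F G')⁻¹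
  else (PowerSeries.X * G') ^ (-k).toNat * ((rS A F G')⁻¹) ^ (-k).toNat * (sS A F G')⁻¹

lemma cfam_zero : cfam A F G' 0 = (sS A F G')⁻¹ := by simp [cfam]

lemma cfam_rec (hA : constantCoeff A = 1) (k : ℤ) :
    A * cfam A F G' k = F * cfam A F G' (k - 1) +
      PowerSeries.X * G' * cfam A F G' (k + 1) + (if k = 0 then 1 else 0) := by
  set r := rS A F G' with hrdef
  set s := sS A F G' with hsdef
  have hr : r * r⁻¹ = 1 := rS_inv A F G'
  have hs : s * s⁻¹ = 1 := sS_inv A F G' hA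
  have e4 : s⁻¹ * s = 1 := by rw [mul_comm]; exact hs
  have hrs : r * r = A * r - PowerSeries.X * F * G' := rS_sq A F G' hA
  have hsr : s = 2 * r - A := rfl
  have hrne : r ≠ 0 := rS_ne A F G'
  have hsne : s ≠ 0 := sS_ne A F G' hA
  have cancel : ∀ m : ℕ, ∀ P Q : PowerSeries ℚ,
      P * (r ^ (m + 2) * s) = Q * (r ^ (m + 2) * s) → P = Q := by
    intro m P Q hpq
    exact mul_right_cancel₀ (mul_ne_zero (pow_ne_zero _ hrne) hsne) hpq
  have hpowr : ∀ a b : ℕ, a ≤ b → (r⁻¹) ^ a * r ^ b = r ^ (b - a) := by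
    intro a b hab
    have hb : r ^ b = r ^ a * r ^ (b - a) := by rw [← pow_add]; congr 1; omega
    rw [hb, ← mul_assoc, ← mul_pow, mul_comm r⁻¹ r, hr, one_pow, one_mul]
  have cv : ∀ j : ℤ, 0 ≤ j → cfam A F G' j = F ^ j.toNat * (r⁻¹) ^ j.toNat * s⁻¹ := by
    intro j hj; simp only [cfam, if_pos hj]; rfl
  have cvn : ∀ j : ℤ, j ≤ 0 →
      cfam A F G' j = (PowerSeries.X * G') ^ (-j).toNat * (r⁻¹) ^ (-j).toNat * s⁻¹ := by
    intro j hj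
    rcases eq_or_lt_of_le hj with rfl | hj'
    · simp [cfam]; rfl
    · simp only [cfam]
      rw [if_neg (by omega : ¬ (0:ℤ) ≤ j)]
  rcases lt_trichotomy k 0 with hk | rfl | hk
  · obtain ⟨m, rfl⟩ : ∃ m : ℕ, k = -((m:ℤ)+1) := ⟨(-k-1).toNat, by omega⟩
    rw [cvn _ (by omega), cvn _ (by omega), cvn _ (by omega), if_neg (by omega)]
    rw [show (-(-((m:ℤ)+1))).toNat = m + 1 by omega,
      show (-(-((m:ℤ)+1) - 1)).toNat = m + 2 by omega,
      show (-(-((m:ℤ)+1) + 1)).toNat = m by omega]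
    apply cancel m
    have e1 : (r⁻¹) ^ (m+1) * r ^ (m+2) = r := by
      rw [hpowr (m+1) (m+2) (by omega), show m + 2 - (m+1) = 1 by omega, pow_one]
    have e2 : (r⁻¹) ^ m * r ^ (m+2) = r * r := by
      rw [hpowr m (m+2) (by omega), show m + 2 - m = 2 by omega, pow_two]
    have e3 : (r⁻¹) ^ (m+2) * r ^ (m+2) = 1 := by
      rw [hpowr (m+2) (m+2) le_rfl, Nat.sub_self, pow_zero]
    calc A * ((PowerSeries.X * G') ^ (m+1) * (r⁻¹) ^ (m+1) * s⁻¹) * (r ^ (m+2) * s)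
        = A * (PowerSeries.X * G') ^ (m+1) * ((r⁻¹) ^ (m+1) * r ^ (m+2)) * (s⁻¹ * s) := by
          ring
      _ = (PowerSeries.X * G') ^ (m+1) * (A * r) := by rw [e1, e4]; ring
      _ = (F * ((PowerSeries.X * G') ^ (m+2) * (r⁻¹) ^ (m+2) * s⁻¹) +
            PowerSeries.X * G' * ((PowerSeries.X * G') ^ m * (r⁻¹) ^ m * s⁻¹) + 0) *
            (r ^ (m+2) * s) := by
          have expand : (F * ((PowerSeries.X * G') ^ (m+2) * (r⁻¹) ^ (m+2) * s⁻¹) +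
              PowerSeries.X * G' * ((PowerSeries.X * G') ^ m * (r⁻¹) ^ m * s⁻¹) + 0) *
              (r ^ (m+2) * s)
              = F * (PowerSeries.X * G') ^ (m+2) * ((r⁻¹) ^ (m+2) * r ^ (m+2)) * (s⁻¹ * s)
                + (PowerSeries.X * G') ^ (m+1) * ((r⁻¹) ^ m * r ^ (m+2)) * (s⁻¹ * s) := by
            ring
          rw [expand, e2, e3, e4]
          linear_combination (-(PowerSeries.X * G') ^ (m+1)) * hrs
  · rw [cv 0 le_rfl, cvn (0-1) (by omega), cv (0+1) (by omega), if_pos rfl]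
    norm_num
    apply cancel 0
    have e3 : (r⁻¹) ^ (0+2) * r ^ (0+2) = 1 := by
      rw [hpowr (0+2) (0+2) le_rfl, Nat.sub_self, pow_zero]
    have hri : r⁻¹ * r = 1 := by rw [mul_comm]; exact hr
    calc A * s⁻¹ * (r ^ (0+2) * s) = (A * r) * r * (s⁻¹ * s) := by ring
      _ = (A * r) * r := by rw [e4]; ring
      _ = (F * (PowerSeries.X * G' * r⁻¹ * s⁻¹) + PowerSeries.X * G' * (F * r⁻¹ * s⁻¹) + 1) *
            (r ^ (0+2) * s) := by
          have expand : (F * (PowerSeries.X * G' * r⁻¹ * s⁻¹) +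
              PowerSeries.X * G' * (F * r⁻¹ * s⁻¹) + 1) * (r ^ (0+2) * s)
              = 2 * (PowerSeries.X * F * G') * r * ((r⁻¹ * r) * (s⁻¹ * s)) + r * r * s := by
            ring
          rw [expand, hri, e4, hsr]
          linear_combination (-2 * r) * hrs
  · obtain ⟨m, rfl⟩ : ∃ m : ℕ, k = (m:ℤ)+1 := ⟨(k-1).toNat, by omega⟩
    rw [cv _ (by omega), cv _ (by omega), cv _ (by omega), if_neg (by omega)]
    rw [show (((m:ℤ)+1)).toNat = m + 1 by omega,
      show (((m:ℤ)+1) - 1).toNat = m by omega,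
      show (((m:ℤ)+1) + 1).toNat = m + 2 by omega]
    apply cancel m
    have e1 : (r⁻¹) ^ (m+1) * r ^ (m+2) = r := by
      rw [hpowr (m+1) (m+2) (by omega), show m + 2 - (m+1) = 1 by omega, pow_one]
    have e2 : (r⁻¹) ^ m * r ^ (m+2) = r * r := by
      rw [hpowr m (m+2) (by omega), show m + 2 - m = 2 by omega, pow_two]
    have e3 : (r⁻¹) ^ (m+2) * r ^ (m+2) = 1 := by
      rw [hpowr (m+2) (m+2) le_rfl, Nat.sub_self, pow_zero]
    calc A * (F ^ (m+1) * (r⁻¹) ^ (m+1) * s⁻¹) * (r ^ (m+2) * s)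
        = A * F ^ (m+1) * ((r⁻¹) ^ (m+1) * r ^ (m+2)) * (s⁻¹ * s) := by ring
      _ = F ^ (m+1) * (A * r) := by rw [e1, e4]; ring
      _ = (F * (F ^ m * (r⁻¹) ^ m * s⁻¹) +
            PowerSeries.X * G' * (F ^ (m+2) * (r⁻¹) ^ (m+2) * s⁻¹) + 0) * (r ^ (m+2) * s) := by
          have expand : (F * (F ^ m * (r⁻¹) ^ m * s⁻¹) +
              PowerSeries.X * G' * (F ^ (m+2) * (r⁻¹) ^ (m+2) * s⁻¹) + 0) * (r ^ (m+2) * s)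
              = F ^ (m+1) * ((r⁻¹) ^ m * r ^ (m+2)) * (s⁻¹ * s)
                + PowerSeries.X * G' * F ^ (m+2) * ((r⁻¹) ^ (m+2) * r ^ (m+2)) * (s⁻¹ * s) := by
            ring
          rw [expand, e2, e3, e4]
          linear_combination (-(F ^ (m+1))) * hrs

end Cand

lemma uniq (A F G' : PowerSeries ℚ) (hA : constantCoeff A = 1)
    (w : ℤ → PowerSeries ℚ)
    (hrec : ∀ k, A * w k = F * w (k - 1) + PowerSeries.X * G' * w (k + 1))
    (hord : ∀ k : ℤ, ∀ n : ℕ, (n : ℤ) + k < 0 → PowerSeries.coeff n (w k) = 0) :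
    ∀ k, w k = 0 := by
  suffices H : ∀ n : ℕ, ∀ k : ℤ, PowerSeries.coeff n (w k) = 0 by
    intro k; ext n; rw [H n k, map_zero]
  intro n
  induction n using Nat.strong_induction_on with
  | _ n IH =>
    have step : ∀ k : ℤ, PowerSeries.coeff n (w k)
        = constantCoeff F * PowerSeries.coeff n (w (k - 1)) := by
      intro k
      have hc := congrArg (PowerSeries.coeff n) (hrec k)
      rw [map_add, coeff_mul, coeff_mul,
        Finset.Nat.sum_antidiagonal_eq_sum_range_succ_mk,
        Finset.Nat.sum_antidiagonal_eq_sum_range_succ_mk,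
        Finset.sum_range_succ', Finset.sum_range_succ'] at hc
      have z1 : ∀ i ∈ Finset.range n,
          PowerSeries.coeff (i+1) A * PowerSeries.coeff (n - (i+1)) (w k) = 0 := by
        intro i hi
        rw [IH (n - (i+1)) (by simp at hi; omega), mul_zero]
      have z2 : ∀ i ∈ Finset.range n,
          PowerSeries.coeff (i+1) F * PowerSeries.coeff (n - (i+1)) (w (k-1)) = 0 := by
        intro i hi
        rw [IH (n - (i+1)) (by simp at hi; omega), mul_zero]
      have z3 : PowerSeries.coeff n (PowerSeries.X * G' * w (k + 1)) = 0 := by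
        rw [mul_assoc]
        rcases n with _ | m
        · simp
        · rw [coeff_succ_X_mul, coeff_mul,
            Finset.Nat.sum_antidiagonal_eq_sum_range_succ_mk]
          apply Finset.sum_eq_zero
          intro i hi
          rw [IH (m - i) (by simp at hi; omega), mul_zero]
      rw [Finset.sum_eq_zero z1, Finset.sum_eq_zero z2, z3] at hc
      simpa [coeff_zero_eq_constantCoeff, hA] using hc
    have main : ∀ j : ℕ, PowerSeries.coeff n (w (-(n:ℤ) - 1 + j)) = 0 := by
      intro j
      induction j with
      | zero => exact hord _ n (by omega)
      | succ j hj =>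
        have := step (-(n:ℤ) - 1 + (j+1))
        rw [show (-(n:ℤ) - 1 + (↑j+1) - 1) = -(n:ℤ) - 1 + j by push_cast; ring] at this
        rw [show ((j:ℤ)+1) = ((j+1 : ℕ) : ℤ) by push_cast; ring] at this
        rw [this, hj, mul_zero]
    intro k
    rcases lt_or_ge ((n:ℤ) + k) 0 with hk | hk
    · exact hord k n hk
    · have hrep : k = -(n:ℤ) - 1 + ((k + n + 1).toNat : ℤ) := by omega
      rw [hrep]
      exact main _

abbrev MvQ := MvPowerSeries (Fin 2) ℚ

noncomputable def emn (m n : ℕ) : Fin 2 →₀ ℕ := Finsupp.single 0 m + Finsupp.single 1 n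

@[simp] lemma emn_apply_zero (m n : ℕ) : emn m n 0 = m := by
  simp [emn, Finsupp.single_apply]

@[simp] lemma emn_apply_one (m n : ℕ) : emn m n 1 = n := by
  simp [emn, Finsupp.single_apply]

lemma emn_le (a b m n : ℕ) : emn a b ≤ emn m n ↔ a ≤ m ∧ b ≤ n := by
  rw [Finsupp.le_def]
  constructor
  · intro hl
    exact ⟨by simpa using hl 0, by simpa using hl 1⟩
  · rintro ⟨h1, h2⟩ i
    fin_cases i <;> simpa
lemma emn_sub (a b m n : ℕ) (h1 : a ≤ m) (h2 : b ≤ n) :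
    emn m n - emn a b = emn (m - a) (n - b) := by
  ext i
  rw [Finsupp.tsub_apply]
  fin_cases i <;> simp

lemma emn_eq_zero (m n : ℕ) : emn m n = 0 ↔ m = 0 ∧ n = 0 := by
  constructor
  · intro hz
    constructor
    · have := congrArg (fun e : Fin 2 →₀ ℕ => e 0) hz; simpa using this
    · have := congrArg (fun e : Fin 2 →₀ ℕ => e 1) hz; simpa using this
  · rintro ⟨rfl, rfl⟩
    simp [emn]

lemma X0_eq : (MvPowerSeries.X 0 : MvQ) = MvPowerSeries.monomial (emn 1 0) 1 := by
  rw [MvPowerSeries.X]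
  congr 1
  simp [emn]

lemma X1_eq : (MvPowerSeries.X 1 : MvQ) = MvPowerSeries.monomial (emn 0 1) 1 := by
  rw [MvPowerSeries.X]
  congr 1
  simp [emn]

lemma aeval_XX (p : Polynomial ℚ) :
    (Polynomial.aeval (MvPowerSeries.X 0 * MvPowerSeries.X 1 : MvQ)) p
      = ∑ j ∈ Finset.range (p.natDegree + 1),
          MvPowerSeries.monomial (emn j j) (p.coeff j) := by
  rw [Polynomial.aeval_eq_sum_range]
  apply Finset.sum_congr rfl
  intro j _
  rw [mul_pow, MvPowerSeries.X_pow_eq, MvPowerSeries.X_pow_eq,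
    MvPowerSeries.monomial_mul_monomial, one_mul]
  rw [show Finsupp.single (0 : Fin 2) j + Finsupp.single 1 j = emn j j from rfl]
  rw [← LinearMap.map_smul, smul_eq_mul, mul_one]

lemma sum_poly_range_ext (p : Polynomial ℚ) (ψ : ℕ → ℚ) (N : ℕ)
    (hψ : ∀ j, N < j → ψ j = 0) :
    ∑ j ∈ Finset.range (p.natDegree + 1), p.coeff j * ψ j
      = ∑ j ∈ Finset.range (N + 1), p.coeff j * ψ j := by
  rcases le_total p.natDegree N with hd | hd
  · apply Finset.sum_subset (Finset.range_subset_range.mpr (by omega))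
    intro x hx hnx
    simp only [Finset.mem_range] at hx hnx
    rw [Polynomial.coeff_eq_zero_of_natDegree_lt (by omega), zero_mul]
  · symm
    apply Finset.sum_subset (Finset.range_subset_range.mpr (by omega))
    intro x hx hnx
    simp only [Finset.mem_range] at hx hnx
    rw [hψ x (by omega), mul_zero]

lemma coeff_aeval_mul (p : Polynomial ℚ) (Φ : MvQ) (m n : ℕ) :
    MvPowerSeries.coeff (emn m n)
        ((Polynomial.aeval (MvPowerSeries.X 0 * MvPowerSeries.X 1 : MvQ)) p * Φ)
      = ∑ j ∈ Finset.range (p.natDegree + 1), p.coeff j *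
          (if j ≤ m ∧ j ≤ n then MvPowerSeries.coeff (emn (m - j) (n - j)) Φ else 0) := by
  rw [aeval_XX, Finset.sum_mul, map_sum]
  apply Finset.sum_congr rfl
  intro j _
  rw [MvPowerSeries.coeff_monomial_mul]
  by_cases hj : j ≤ m ∧ j ≤ n
  · rw [if_pos ((emn_le j j m n).mpr hj), if_pos hj, emn_sub j j m n hj.1 hj.2]
  · rw [if_neg (fun hc => hj ((emn_le j j m n).mp hc)), if_neg hj, mul_zero]

lemma coeff_X0_mul (Φ : MvQ) (m n : ℕ) :
    MvPowerSeries.coeff (emn m n) ((MvPowerSeries.X 0 : MvQ) * Φ)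
      = if 1 ≤ m then MvPowerSeries.coeff (emn (m - 1) n) Φ else 0 := by
  rw [X0_eq, MvPowerSeries.coeff_monomial_mul]
  by_cases hm : 1 ≤ m
  · rw [if_pos ((emn_le 1 0 m n).mpr ⟨hm, Nat.zero_le n⟩), if_pos hm,
      emn_sub 1 0 m n hm (Nat.zero_le n), one_mul, Nat.sub_zero]
  · rw [if_neg (fun hc => hm ((emn_le 1 0 m n).mp hc).1), if_neg hm]

lemma coeff_X1_mul (Φ : MvQ) (m n : ℕ) :
    MvPowerSeries.coeff (emn m n) ((MvPowerSeries.X 1 : MvQ) * Φ)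
      = if 1 ≤ n then MvPowerSeries.coeff (emn m (n - 1)) Φ else 0 := by
  rw [X1_eq, MvPowerSeries.coeff_monomial_mul]
  by_cases hn : 1 ≤ n
  · rw [if_pos ((emn_le 0 1 m n).mpr ⟨Nat.zero_le m, hn⟩), if_pos hn,
      emn_sub 0 1 m n (Nat.zero_le m) hn, one_mul, Nat.sub_zero]
  · rw [if_neg (fun hc => hn ((emn_le 0 1 m n).mp hc).2), if_neg hn]

lemma Grec (f g h : Polynomial ℚ) (u : MvQ)
    (hu : u = 1
      - (MvPowerSeries.X 0 : MvQ) *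
          Polynomial.aeval ((MvPowerSeries.X 0 : MvQ) * MvPowerSeries.X 1) f
      - (MvPowerSeries.X 1 : MvQ) *
          Polynomial.aeval ((MvPowerSeries.X 0 : MvQ) * MvPowerSeries.X 1) g
      - Polynomial.aeval ((MvPowerSeries.X 0 : MvQ) * MvPowerSeries.X 1) h)
    (hG : u * u⁻¹ = 1) (m n : ℕ) :
    MvPowerSeries.coeff (emn m n) u⁻¹
      = (if 1 ≤ m then ∑ j ∈ Finset.range (f.natDegree + 1), f.coeff j *
            (if j ≤ m - 1 ∧ j ≤ n then
              MvPowerSeries.coeff (emn (m - 1 - j) (n - j)) u⁻¹ else 0) else 0)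
        + (if 1 ≤ n then ∑ j ∈ Finset.range (g.natDegree + 1), g.coeff j *
            (if j ≤ m ∧ j ≤ n - 1 then
              MvPowerSeries.coeff (emn (m - j) (n - 1 - j)) u⁻¹ else 0) else 0)
        + (∑ j ∈ Finset.range (h.natDegree + 1), h.coeff j *
            (if j ≤ m ∧ j ≤ n then
              MvPowerSeries.coeff (emn (m - j) (n - j)) u⁻¹ else 0))
        + (if m = 0 ∧ n = 0 then 1 else 0) := by
  classical
  set G := u⁻¹ with hGdef
  rw [hu, sub_mul, sub_mul, sub_mul, one_mul, mul_assoc, mul_assoc] at hG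
  have hc := congrArg (MvPowerSeries.coeff (emn m n)) hG
  rw [map_sub, map_sub, map_sub, coeff_X0_mul, coeff_X1_mul, coeff_aeval_mul,
    coeff_aeval_mul, coeff_aeval_mul, MvPowerSeries.coeff_one] at hc
  simp only [emn_eq_zero] at hc
  linarith [hc]

lemma coeff_X_mul' (Ψ : PowerSeries ℚ) (n : ℕ) :
    PowerSeries.coeff n (PowerSeries.X * Ψ)
      = if 1 ≤ n then PowerSeries.coeff (n - 1) Ψ else 0 := by
  rcases n with _ | m
  · simp
  · rw [if_pos (by omega), coeff_succ_X_mul, Nat.succ_sub_one]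

lemma coeff_polymul (p : Polynomial ℚ) (Ψ : PowerSeries ℚ) (n : ℕ) :
    PowerSeries.coeff n ((p : PowerSeries ℚ) * Ψ)
      = ∑ i ∈ Finset.range (n + 1), p.coeff i * PowerSeries.coeff (n - i) Ψ := by
  rw [PowerSeries.coeff_mul, Finset.Nat.sum_antidiagonal_eq_sum_range_succ_mk]
  simp [Polynomial.coeff_coe]

noncomputable def dd (u : MvQ) (k : ℤ) (n : ℕ) : ℚ :=
  if 0 ≤ (n : ℤ) + k then MvPowerSeries.coeff (emn ((n : ℤ) + k).toNat n) u⁻¹ else 0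

noncomputable def dser (u : MvQ) (k : ℤ) : PowerSeries ℚ := PowerSeries.mk (dd u k)

lemma drec (f g h : Polynomial ℚ) (u : MvQ)
    (hu : u = 1
      - (MvPowerSeries.X 0 : MvQ) *
          Polynomial.aeval ((MvPowerSeries.X 0 : MvQ) * MvPowerSeries.X 1) f
      - (MvPowerSeries.X 1 : MvQ) *
          Polynomial.aeval ((MvPowerSeries.X 0 : MvQ) * MvPowerSeries.X 1) g
      - Polynomial.aeval ((MvPowerSeries.X 0 : MvQ) * MvPowerSeries.X 1) h)
    (hG : u * u⁻¹ = 1) (k : ℤ) :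
    (1 - (h : PowerSeries ℚ)) * dser u k
      = (f : PowerSeries ℚ) * dser u (k - 1)
        + PowerSeries.X * (g : PowerSeries ℚ) * dser u (k + 1)
        + (if k = 0 then 1 else 0) := by
  ext n
  rw [sub_mul, one_mul, map_sub, map_add, map_add, coeff_polymul, coeff_polymul,
    mul_assoc, coeff_X_mul', coeff_polymul, apply_ite (PowerSeries.coeff n),
    map_zero, PowerSeries.coeff_one]
  simp only [dser, PowerSeries.coeff_mk]
  rcases lt_or_ge ((n : ℤ) + k) 0 with hneg | hpos
  · have z0 : dd u k n = 0 := by rw [dd, if_neg (by omega)]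
    have z1 : ∀ i ∈ Finset.range (n + 1), h.coeff i * dd u k (n - i) = 0 := by
      intro i hi
      simp only [Finset.mem_range] at hi
      rw [dd, if_neg (by omega), mul_zero]
    have z2 : ∀ i ∈ Finset.range (n + 1), f.coeff i * dd u (k - 1) (n - i) = 0 := by
      intro i hi
      simp only [Finset.mem_range] at hi
      rw [dd, if_neg (by omega), mul_zero]
    rw [z0, Finset.sum_eq_zero z1, Finset.sum_eq_zero z2, if_neg (by omega : ¬ k = 0)]
    rcases Nat.eq_zero_or_pos n with rfl | hn
    · norm_num
    · have z3 : ∀ i ∈ Finset.range (n - 1 + 1), g.coeff i * dd u (k + 1) (n - 1 - i) = 0 := by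
        intro i hi
        simp only [Finset.mem_range] at hi
        rw [dd, if_neg (by omega), mul_zero]
      rw [if_pos (show 1 ≤ n by omega), Finset.sum_eq_zero z3]
      norm_num
  · obtain ⟨m, hm⟩ : ∃ m : ℕ, (m : ℤ) = (n : ℤ) + k :=
      ⟨((n : ℤ) + k).toNat, Int.toNat_of_nonneg hpos⟩
    have hGrec := Grec f g h u hu hG m n
    have hd0 : dd u k n = MvPowerSeries.coeff (emn m n) u⁻¹ := by
      rw [dd, if_pos (by omega), show (((n:ℕ) : ℤ) + k).toNat = m by omega]
    have Th : ∑ i ∈ Finset.range (n + 1), h.coeff i * dd u k (n - i)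
        = ∑ j ∈ Finset.range (h.natDegree + 1), h.coeff j *
            (if j ≤ m ∧ j ≤ n then MvPowerSeries.coeff (emn (m - j) (n - j)) u⁻¹ else 0) := by
      rw [sum_poly_range_ext h _ n (by intro j hj; rw [if_neg (by omega)])]
      apply Finset.sum_congr rfl
      intro i hi
      simp only [Finset.mem_range] at hi
      congr 1
      rw [dd]
      by_cases hc : i ≤ m
      · rw [if_pos (by omega), if_pos ⟨hc, by omega⟩,
          show ((((n - i : ℕ) : ℤ) + k).toNat) = m - i by omega]
      · rw [if_neg (by omega), if_neg (by tauto)]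
    have Tf : ∑ i ∈ Finset.range (n + 1), f.coeff i * dd u (k - 1) (n - i)
        = (if 1 ≤ m then ∑ j ∈ Finset.range (f.natDegree + 1), f.coeff j *
            (if j ≤ m - 1 ∧ j ≤ n then
              MvPowerSeries.coeff (emn (m - 1 - j) (n - j)) u⁻¹ else 0) else 0) := by
      by_cases hm1 : 1 ≤ m
      · rw [if_pos hm1, sum_poly_range_ext f _ n (by intro j hj; rw [if_neg (by omega)])]
        apply Finset.sum_congr rfl
        intro i hi
        simp only [Finset.mem_range] at hi
        congr 1
        rw [dd]
        by_cases hc : i ≤ m - 1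
        · rw [if_pos (by omega), if_pos ⟨hc, by omega⟩,
            show ((((n - i : ℕ) : ℤ) + (k - 1)).toNat) = m - 1 - i by omega]
        · rw [if_neg (by omega), if_neg (by tauto)]
      · rw [if_neg hm1]
        apply Finset.sum_eq_zero
        intro i hi
        simp only [Finset.mem_range] at hi
        rw [dd, if_neg (by omega), mul_zero]
    have Tg : (if 1 ≤ n then
          ∑ i ∈ Finset.range (n - 1 + 1), g.coeff i * dd u (k + 1) (n - 1 - i) else 0)
        = (if 1 ≤ n then ∑ j ∈ Finset.range (g.natDegree + 1), g.coeff j *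
            (if j ≤ m ∧ j ≤ n - 1 then
              MvPowerSeries.coeff (emn (m - j) (n - 1 - j)) u⁻¹ else 0) else 0) := by
      by_cases hn1 : 1 ≤ n
      · rw [if_pos hn1, if_pos hn1,
          sum_poly_range_ext g _ (n - 1) (by intro j hj; rw [if_neg (by omega)])]
        apply Finset.sum_congr rfl
        intro i hi
        simp only [Finset.mem_range] at hi
        congr 1
        rw [dd]
        by_cases hc : i ≤ m
        · rw [if_pos (by omega), if_pos ⟨hc, by omega⟩,
            show ((((n - 1 - i : ℕ) : ℤ) + (k + 1)).toNat) = m - i by omega]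
        · rw [if_neg (by omega), if_neg (by tauto)]
      · rw [if_neg hn1, if_neg hn1]
    have Td : (if m = 0 ∧ n = 0 then (1:ℚ) else 0) = (if k = 0 then if n = 0 then (1:ℚ) else 0 else 0) := by
      split_ifs <;> first | rfl | omega
    rw [hd0, Th, Tf, Tg, ← Td]
    linarith [hGrec]

lemma constantCoeff_aeval (p : Polynomial ℚ) :
    MvPowerSeries.constantCoeff
        ((Polynomial.aeval (MvPowerSeries.X 0 * MvPowerSeries.X 1 : MvQ)) p) = p.coeff 0 := by
  rw [aeval_XX, map_sum]
  rw [Finset.sum_eq_single 0]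
  · rw [← MvPowerSeries.coeff_zero_eq_constantCoeff_apply, MvPowerSeries.coeff_monomial,
      if_pos (by simp [emn])]
  · intro j _ hj
    rw [← MvPowerSeries.coeff_zero_eq_constantCoeff_apply, MvPowerSeries.coeff_monomial,
      if_neg (fun hc => hj (by
        have := (emn_eq_zero j j).mp hc.symm
        omega))]
  · intro hn
    simp at hn

end StanleyAux

open StanleyAux PowerSeries in
theorem stanley_diagonal (f g h : Polynomial ℚ) (hh : h.coeff 0 = 0)
    (u : MvPowerSeries (Fin 2) ℚ)
    (hu : u = 1
      - (MvPowerSeries.X 0 : MvPowerSeries (Fin 2) ℚ) *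
          Polynomial.aeval ((MvPowerSeries.X 0 : MvPowerSeries (Fin 2) ℚ) *
            MvPowerSeries.X 1) f
      - (MvPowerSeries.X 1 : MvPowerSeries (Fin 2) ℚ) *
          Polynomial.aeval ((MvPowerSeries.X 0 : MvPowerSeries (Fin 2) ℚ) *
            MvPowerSeries.X 1) g
      - Polynomial.aeval ((MvPowerSeries.X 0 : MvPowerSeries (Fin 2) ℚ) *
          MvPowerSeries.X 1) h)
    (D : PowerSeries ℚ)
    (hD : D = PowerSeries.mk fun n =>
      MvPowerSeries.coeff (σ := Fin 2) (R := ℚ) (Finsupp.single 0 n + Finsupp.single 1 n) u⁻¹) :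
    MvPowerSeries.constantCoeff (σ := Fin 2) (R := ℚ) u = 1 ∧
    D ^ 2 * ((1 - (h : PowerSeries ℚ)) ^ 2 -
      4 * PowerSeries.X * (f : PowerSeries ℚ) * (g : PowerSeries ℚ)) = 1 := by
  have hcu : MvPowerSeries.constantCoeff u = 1 := by
    rw [hu, map_sub, map_sub, map_sub, map_one, map_mul, map_mul,
      MvPowerSeries.constantCoeff_X, MvPowerSeries.constantCoeff_X,
      constantCoeff_aeval, constantCoeff_aeval, constantCoeff_aeval, hh]
    ring
  refine ⟨hcu, ?_⟩
  have hG : u * u⁻¹ = 1 := MvPowerSeries.mul_inv_cancel u (by rw [hcu]; norm_num)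
  set A : PowerSeries ℚ := 1 - (h : PowerSeries ℚ) with hAdef
  set F : PowerSeries ℚ := (f : PowerSeries ℚ) with hFdef
  set G' : PowerSeries ℚ := (g : PowerSeries ℚ) with hG'def
  have hA : PowerSeries.constantCoeff A = 1 := by
    rw [hAdef, map_sub, map_one, Polynomial.constantCoeff_coe, hh, sub_zero]
  have hrec : ∀ k : ℤ, A * (dser u k - cfam A F G' k)
      = F * (dser u (k-1) - cfam A F G' (k-1))
        + PowerSeries.X * G' * (dser u (k+1) - cfam A F G' (k+1)) := by
    intro k
    have h1 := drec f g h u hu hG k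
    have h2 := cfam_rec A F G' hA k
    linear_combination h1 - h2
  have hord : ∀ k : ℤ, ∀ n : ℕ, (n : ℤ) + k < 0 →
      PowerSeries.coeff n (dser u k - cfam A F G' k) = 0 := by
    intro k n hkn
    rw [map_sub]
    have hd : PowerSeries.coeff n (dser u k) = 0 := by
      rw [dser, PowerSeries.coeff_mk, dd, if_neg (by omega)]
    have hc : PowerSeries.coeff n (cfam A F G' k) = 0 := by
      have hkneg : ¬ (0:ℤ) ≤ k := by omega
      rw [cfam, if_neg hkneg]
      have hdvd : (PowerSeries.X : PowerSeries ℚ) ^ ((-k).toNat) ∣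
          (PowerSeries.X * G') ^ (-k).toNat * ((rS A F G')⁻¹) ^ (-k).toNat * (sS A F G')⁻¹ := by
        rw [mul_pow]
        exact ⟨G' ^ (-k).toNat * ((rS A F G')⁻¹) ^ (-k).toNat * (sS A F G')⁻¹, by ring⟩
      exact (PowerSeries.X_pow_dvd_iff.mp hdvd) n (by omega)
    rw [hd, hc, sub_zero]
  have hzero := uniq A F G' hA _ hrec hord 0
  have hds : dser u 0 = cfam A F G' 0 := by
    have := sub_eq_zero.mp hzero
    exact this
  have hDd : D = dser u 0 := by
    rw [hD, dser]
    unfold dd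
    congr 1

  set s : PowerSeries ℚ := sS A F G' with hsdef
  have hWs : (1 - (h : PowerSeries ℚ)) ^ 2 -
      4 * PowerSeries.X * (f : PowerSeries ℚ) * (g : PowerSeries ℚ) = s * s := by
    rw [hsdef, sS_sq A F G' hA, ← hAdef, ← hFdef, ← hG'def]
    ring
  rw [hWs, hDd, hds, cfam_zero, ← hsdef]
  have hsinv : s * s⁻¹ = 1 := sS_inv A F G' hA
  calc s⁻¹ ^ 2 * (s * s) = (s * s⁻¹) ^ 2 := by ring
    _ = 1 := by rw [hsinv, one_pow]
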